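/- arXiv:0901.0869 — 2 statements merged into one kernel-verified Lean document; each statement's English description precedes it below -/
import Mathlib

section
/- Let ℛ be a right-linear TRS over 𝓖 and let 𝒞_T(ℛ) be the automaton obtained by saturating the union of 𝒜_T and ℬ(ℛ) under the saturation inference rule. Then (→_ℛ*)[T] ⊆ L(𝒞_T(ℛ)), i.e., every ground term that rewrites in ℛ to a term of T is accepted by 𝒞_T(ℛ). -/
set_option maxHeartbeats 1000000

/-! ## Terms over a signature -/

/-- Terms over a signature given by a type `F` of function symbols together with
an arity function `ar`; variables are natural numbers. -/
inductive Term (F : Type) (ar : F → ℕ) : Type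
  | var : ℕ → Term F ar
  | app : (f : F) → (Fin (ar f) → Term F ar) → Term F ar

namespace Term

variable {F : Type} {ar : F → ℕ}

/-- The (finite) set of variables of a term. -/
def vars : Term F ar → Finset ℕ
  | var n => {n}
  | app _ ts => Finset.univ.biUnion fun i => (ts i).vars

/-- A term is ground if it contains no variables. -/
def Ground (t : Term F ar) : Prop := t.vars = ∅

/-- The number of occurrences of the variable `n` in a term. -/
def count (n : ℕ) : Term F ar → ℕ
  | var m => if m = n then 1 else 0
  | app _ ts => ∑ i, (ts i).count n

/-- A term is linear if no variable occurs twice in it. -/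
def Linear (t : Term F ar) : Prop := ∀ n, t.count n ≤ 1

/-- Applying a substitution to a term. -/
def subst (σ : ℕ → Term F ar) : Term F ar → Term F ar
  | var n => σ n
  | app f ts => app f fun i => (ts i).subst σ

/-- The subterm at a position (a list of argument indices), if the position is valid. -/
def subtermAt : Term F ar → List ℕ → Option (Term F ar)
  | t, [] => some t
  | var _, _ :: _ => none
  | app f ts, i :: p => if h : i < ar f then (ts ⟨i, h⟩).subtermAt p else none

/-- Replacing the subterm at a position, if the position is valid. -/
def replaceAt : Term F ar → List ℕ → Term F ar → Option (Term F ar)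
  | _, [], u => some u
  | var _, _ :: _, _ => none
  | app f ts, i :: p, u =>
      if h : i < ar f then
        ((ts ⟨i, h⟩).replaceAt p u).map fun s => app f (Function.update ts ⟨i, h⟩ s)
      else none

/-- `s.IsSubtermOf t` : `s` is a subterm of `t`. -/
def IsSubtermOf (s t : Term F ar) : Prop := ∃ p, t.subtermAt p = some s

/-- Relabelling of function symbols along an arity-preserving map of signatures. -/
def relabel {G : Type} {arG : G → ℕ} (φ : F → G) (h : ∀ f, arG (φ f) = ar f) :
    Term F ar → Term G arG
  | var n => var n
  | app f ts => app (φ f) fun i => (ts (Fin.cast (h f) i)).relabel φ h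

end Term

/-! ## Rewriting -/

/-- One-step rewriting with a set of rewrite rules: there are a position `p` of `s`,
a rule `(l, r)` and a substitution `σ` with `s|_p = lσ` and `t = s[rσ]_p`. -/
def Rewrites {F : Type} {ar : F → ℕ} (R : Set (Term F ar × Term F ar))
    (s t : Term F ar) : Prop :=
  ∃ (p : List ℕ) (l r : Term F ar) (σ : ℕ → Term F ar),
    (l, r) ∈ R ∧ s.subtermAt p = some (l.subst σ) ∧ s.replaceAt p (r.subst σ) = some t

/-- Many-step rewriting (reflexive–transitive closure). -/
abbrev RewritesStar {F : Type} {ar : F → ℕ} (R : Set (Term F ar × Term F ar)) :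
    Term F ar → Term F ar → Prop :=
  Relation.ReflTransGen (Rewrites R)

/-- A term rewriting system: a finite set of rules whose left-hand sides are not variables. -/
structure TRS (F : Type) (ar : F → ℕ) where
  rules : Set (Term F ar × Term F ar)
  finite : rules.Finite
  lhs_not_var : ∀ lr ∈ rules, ∀ n, lr.1 ≠ Term.var n

namespace TRS

variable {F : Type} {ar : F → ℕ}

def LeftLinear (R : TRS F ar) : Prop := ∀ lr ∈ R.rules, lr.1.Linear

def RightLinear (R : TRS F ar) : Prop := ∀ lr ∈ R.rules, lr.2.Linear

/-- A TRS is linear if all left- and right-hand sides are linear terms. -/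
def IsLinear (R : TRS F ar) : Prop := R.LeftLinear ∧ R.RightLinear

/-- A TRS is growing if every variable occurring both in the left- and the right-hand
side of a rule occurs at depth 1 in the left-hand side. -/
def Growing (R : TRS F ar) : Prop :=
  ∀ lr ∈ R.rules, ∀ n ∈ lr.1.vars, n ∈ lr.2.vars →
    ∀ (f : F) (ts : Fin (ar f) → Term F ar), lr.1 = Term.app f ts →
      ∀ i, n ∈ (ts i).vars → ts i = Term.var n

/-- A redex is an instance of a left-hand side. -/
def IsRedex (R : TRS F ar) (s : Term F ar) : Prop :=
  ∃ lr ∈ R.rules, ∃ σ : ℕ → Term F ar, s = lr.1.subst σ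

/-- `p` is a redex position of `s`. -/
def RedexPos (R : TRS F ar) (s : Term F ar) (p : List ℕ) : Prop :=
  ∃ u, s.subtermAt p = some u ∧ R.IsRedex u

def Reducible (R : TRS F ar) (s : Term F ar) : Prop := ∃ p, R.RedexPos s p

/-- A term is root-stable if it cannot be rewritten to a redex. -/
def RootStable (R : TRS F ar) (s : Term F ar) : Prop :=
  ¬ ∃ t, RewritesStar R.rules s t ∧ R.IsRedex t

/-- Ground normal forms. -/
def NFset (R : TRS F ar) : Set (Term F ar) := { t | t.Ground ∧ ¬ R.Reducible t }

/-- Ground redexes. -/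
def RedexSet (R : TRS F ar) : Set (Term F ar) := { t | t.Ground ∧ R.IsRedex t }

/-- Root-stable ground terms. -/
def RSset (R : TRS F ar) : Set (Term F ar) := { t | t.Ground ∧ R.RootStable t }

/-- Relabelling a TRS along an arity-preserving map of signatures. -/
def relabel {G : Type} {arG : G → ℕ} (R : TRS F ar) (φ : F → G)
    (h : ∀ f, arG (φ f) = ar f) : TRS G arG where
  rules := (fun lr => (lr.1.relabel φ h, lr.2.relabel φ h)) '' R.rules
  finite := R.finite.image _
  lhs_not_var := by
    rintro lr ⟨lr0, h0, rfl⟩ n hn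
    dsimp only at hn
    cases h1 : lr0.1 with
    | var m => exact absurd h1 (R.lhs_not_var lr0 h0 m)
    | app f ts =>
        rw [h1] at hn
        simp only [Term.relabel] at hn
        cases hn

end TRS

/-! ## Tree automata -/

/-- A transition rule `f(q₁,…,qₙ) → q` of a bottom-up tree automaton. -/
abbrev TARule (F : Type) (ar : F → ℕ) (Q : Type) : Type :=
  (f : F) × ((Fin (ar f) → Q) × Q)

/-- A (finite bottom-up) tree automaton without ε-transitions. -/
structure TreeAutomaton (F : Type) (ar : F → ℕ) (Q : Type) where
  trans : Set (TARule F ar Q)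
  final : Set Q

/-- `Reaches Δ t q` : the ground term `t` rewrites to the state `q` using the
transition rules `Δ`. -/
inductive Reaches {F : Type} {ar : F → ℕ} {Q : Type} (Δ : Set (TARule F ar Q)) :
    Term F ar → Q → Prop
  | app {f : F} {ts : Fin (ar f) → Term F ar} {qs : Fin (ar f) → Q} {q : Q} :
      (∀ i, Reaches Δ (ts i) (qs i)) → (⟨f, qs, q⟩ : TARule F ar Q) ∈ Δ →
      Reaches Δ (Term.app f ts) q

/-- `ReachesT Δ θ t q` : the term `t`, whose variables are interpreted as the states
given by `θ`, rewrites to the state `q` using the transition rules `Δ`. -/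
inductive ReachesT {F : Type} {ar : F → ℕ} {Q : Type} (Δ : Set (TARule F ar Q))
    (θ : ℕ → Q) : Term F ar → Q → Prop
  | var (n : ℕ) : ReachesT Δ θ (Term.var n) (θ n)
  | app {f : F} {ts : Fin (ar f) → Term F ar} {qs : Fin (ar f) → Q} {q : Q} :
      (∀ i, ReachesT Δ θ (ts i) (qs i)) → (⟨f, qs, q⟩ : TARule F ar Q) ∈ Δ →
      ReachesT Δ θ (Term.app f ts) q

/-- The language of a tree automaton: all ground terms reaching a final state. -/
def Lang {F : Type} {ar : F → ℕ} {Q : Type} (A : TreeAutomaton F ar Q) :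
    Set (Term F ar) :=
  { t | t.Ground ∧ ∃ q ∈ A.final, Reaches A.trans t q }

/-- A set of ground terms is recognizable if it is the language of some finite
tree automaton. -/
def Recognizable {F : Type} {ar : F → ℕ} (T : Set (Term F ar)) : Prop :=
  ∃ (Q : Type) (_ : Fintype Q) (A : TreeAutomaton F ar Q), T = Lang A

/-- The set of states occurring in a set of transition rules. -/
def statesOf {F : Type} {ar : F → ℕ} {Q : Type} (Γ : Set (TARule F ar Q)) : Set Q :=
  { q | ∃ ρ ∈ Γ, ρ.2.2 = q ∨ ∃ i, ρ.2.1 i = q }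

/-! ## The automaton `ℬ(ℛ)` -/

/-- The canonical representative of the state `⟨t⟩` of `ℬ(ℛ)`: all variables are
identified with the single state `⟨x⟩`, represented by `var 0`. -/
def stPattern {F : Type} {ar : F → ℕ} : Term F ar → Term F ar
  | Term.var _ => Term.var 0
  | Term.app f ts => Term.app f ts

/-- `S_ℛ`: the set of all subterms of arguments of left-hand sides of `ℛ`. -/
def SR {F : Type} {ar : F → ℕ} (R : TRS F ar) : Set (Term F ar) :=
  { s | ∃ lr ∈ R.rules, ∃ (f : F) (ts : Fin (ar f) → Term F ar),
        lr.1 = Term.app f ts ∧ ∃ i, s.IsSubtermOf (ts i) }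

/-- The representatives of the states of `ℬ(ℛ)`: the patterns of terms of `S_ℛ`,
together with `⟨x⟩`. -/
def BStateSet {F : Type} {ar : F → ℕ} (R : TRS F ar) : Set (Term F ar) :=
  stPattern '' SR R ∪ {Term.var 0}

/-- The matching rules of `ℬ(ℛ)` (with states encoded by `enc`):
`f(⟨t₁⟩,…,⟨tₙ⟩) → ⟨t⟩` for every `t = f(t₁,…,tₙ) ∈ S_ℛ`. -/
def BMatch {F : Type} {ar : F → ℕ} {Q : Type} (R : TRS F ar) (enc : Term F ar → Q) :
    Set (TARule F ar Q) :=
  { ρ | ∃ (f : F) (ts : Fin (ar f) → Term F ar), Term.app f ts ∈ SR R ∧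
        ρ = ⟨f, fun i => enc (stPattern (ts i)), enc (Term.app f ts)⟩ }

/-- The propagation rules `f(⟨x⟩,…,⟨x⟩) → ⟨x⟩` for every function symbol `f`. -/
def BProp {F : Type} {ar : F → ℕ} {Q : Type} (enc : Term F ar → Q) :
    Set (TARule F ar Q) :=
  { ρ | ∃ f : F, ρ = ⟨f, fun _ => enc (Term.var 0), enc (Term.var 0)⟩ }

/-- The transition rules of the automaton `ℬ(ℛ)`. -/
def BTrans {F : Type} {ar : F → ℕ} {Q : Type} (R : TRS F ar) (enc : Term F ar → Q) :
    Set (TARule F ar Q) :=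
  BMatch R enc ∪ BProp enc

/-- `Σ(t)`: the set of ground instances of the term `t`. -/
def GInst {F : Type} {ar : F → ℕ} (t : Term F ar) : Set (Term F ar) :=
  { s | s.Ground ∧ ∃ σ, s = t.subst σ }

/-! ## Saturation -/

/-- The state `qᵢ` associated to the argument `lᵢ` of a left-hand side in the
saturation rule: `lᵢθ` if `lᵢ` is a variable occurring in `r` (whose variable set
is `rv`), and `⟨lᵢ⟩` otherwise. -/
def satArg {F : Type} {ar : F → ℕ} {Q : Type} (enc : Term F ar → Q) (θ : ℕ → Q)
    (rv : Finset ℕ) : Term F ar → Q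
  | Term.var n => if n ∈ rv then θ n else enc (Term.var 0)
  | Term.app f ts => enc (Term.app f ts)

/-- One step of the saturation process: add all transition rules `f(q₁,…,qₙ) → q`
obtained from a rewrite rule `f(l₁,…,lₙ) → r` and a state substitution `θ`
(with values among the states `Qc` of the automaton) such that `rθ →_Γ* q`. -/
def satStep {F : Type} {ar : F → ℕ} {Q : Type} (R : TRS F ar) (enc : Term F ar → Q)
    (Qc : Set Q) (Γ : Set (TARule F ar Q)) : Set (TARule F ar Q) :=
  Γ ∪ { ρ | ∃ (f : F) (ls : Fin (ar f) → Term F ar) (r : Term F ar) (θ : ℕ → Q) (q : Q),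
        (Term.app f ls, r) ∈ R.rules ∧ (∀ n ∈ r.vars, θ n ∈ Qc) ∧ ReachesT Γ θ r q ∧
        ρ = ⟨f, fun i => satArg enc θ r.vars (ls i), q⟩ }

/-- The saturated set of transition rules: the closure of `Γ0` under the saturation
inference rule. -/
def satGamma {F : Type} {ar : F → ℕ} {Q : Type} (R : TRS F ar) (enc : Term F ar → Q)
    (Qc : Set Q) (Γ0 : Set (TARule F ar Q)) : Set (TARule F ar Q) :=
  ⋃ n, (satStep R enc Qc)^[n] Γ0

/-! ## The automaton `𝒞_T(ℛ)` and its extension `𝒞'_T(ℛ)` -/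

/-- The data of the construction of the automaton `𝒞_T(ℛ)`: an automaton `𝒜_T`
recognizing `T` with all states accessible and state set `QA`, together with an
encoding `enc` of the states `⟨t⟩` of `ℬ(ℛ)` into the common state type `Q`, such
that every state common to `𝒜_T` and `ℬ(ℛ)` accepts the same set of terms in both
automata. -/
structure CSetup {G : Type} [Fintype G] {arG : G → ℕ} (Q : Type) [Fintype Q]
    (Rg : TRS G arG) (T : Set (Term G arG)) where
  enc : Term G arG → Q
  A : TreeAutomaton G arG Q
  QA : Set Q
  henc : Set.InjOn enc (BStateSet Rg)
  hAstates : ∀ ρ ∈ A.trans, ρ.2.2 ∈ QA ∧ ∀ i, ρ.2.1 i ∈ QA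
  hfinal : A.final ⊆ QA
  hacc : ∀ q ∈ QA, ∃ s : Term G arG, s.Ground ∧ Reaches A.trans s q
  hground : ∃ s : Term G arG, s.Ground
  hshared : ∀ q ∈ QA ∩ enc '' BStateSet Rg, ∀ s : Term G arG,
      Reaches A.trans s q ↔ Reaches (BTrans Rg enc) s q
  hT : T = Lang A

namespace CSetup

variable {G : Type} [Fintype G] {arG : G → ℕ} {Q : Type} [Fintype Q]
  {Rg : TRS G arG} {T : Set (Term G arG)}

/-- The set of states of the automaton `𝒞_T(ℛ)`. -/
def Qstates (C : CSetup Q Rg T) : Set Q := C.QA ∪ C.enc '' BStateSet Rg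

/-- The transition rules of `𝒞_T(ℛ)` before saturation: the union of `𝒜_T` and `ℬ(ℛ)`. -/
def Γ0 (C : CSetup Q Rg T) : Set (TARule G arG Q) := C.A.trans ∪ BTrans Rg C.enc

/-- The transition rules of `𝒞_T(ℛ)` after saturation. -/
def Γsat (C : CSetup Q Rg T) : Set (TARule G arG Q) :=
  satGamma Rg C.enc C.Qstates C.Γ0

end CSetup

/-- The redex rules `f(⟪l₁⟫,…,⟪lₙ⟫) → q_r` for every left-hand side `f(l₁,…,lₙ)`. -/
def RedexRules {F : Type} {ar : F → ℕ} {Q : Type} (R : TRS F ar)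
    (enc2 : Term F ar → Q) (qr : Q) : Set (TARule F ar Q) :=
  { ρ | ∃ (f : F) (ls : Fin (ar f) → Term F ar) (r : Term F ar),
        (Term.app f ls, r) ∈ R.rules ∧
        ρ = ⟨f, fun i => enc2 (stPattern (ls i)), qr⟩ }

/-- The rules `f(⟨x⟩,…,q_r,…,⟨x⟩) → q_r`. -/
def QrProp {F : Type} {ar : F → ℕ} {Q : Type} (enc : Term F ar → Q) (qr : Q) :
    Set (TARule F ar Q) :=
  { ρ | ∃ (f : F) (j : Fin (ar f)),
        ρ = ⟨f, fun i => if i = j then qr else enc (Term.var 0), qr⟩ }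

/-- The data of the construction of the automaton `𝒞'_T(ℛ)`: `𝒞_T(ℛ)` extended with
a fresh copy `⟪t⟫` (encoded by `enc2`, with `⟪x⟫ = ⟨x⟩`) of the states of `ℬ(ℛ)` and
a fresh state `q_r`. -/
structure CpSetup {G : Type} [Fintype G] {arG : G → ℕ} (Q : Type) [Fintype Q]
    (Rg : TRS G arG) (T : Set (Term G arG)) extends CSetup Q Rg T where
  enc2 : Term G arG → Q
  qr : Q
  henc2 : Set.InjOn enc2 (BStateSet Rg)
  hx : enc2 (Term.var 0) = enc (Term.var 0)
  hfresh : (enc2 '' (BStateSet Rg \ {Term.var 0}) ∪ {qr}) ∩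
              (QA ∪ enc '' BStateSet Rg) = ∅
  hqr : qr ∉ enc2 '' (BStateSet Rg \ {Term.var 0})

namespace CpSetup

variable {G : Type} [Fintype G] {arG : G → ℕ} {Q : Type} [Fintype Q]
  {Rg : TRS G arG} {T : Set (Term G arG)}

/-- The transition rules `Γ'` of the automaton `𝒞'_T(ℛ)`. -/
def Γ' (C : CpSetup Q Rg T) : Set (TARule G arG Q) :=
  C.toCSetup.Γsat ∪ BMatch Rg C.enc2 ∪ RedexRules Rg C.enc2 C.qr ∪ QrProp C.enc C.qr

end CpSetup

/-! ## The signature `𝓖 = 𝓕 ∪ {•}` -/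

/-- The arity function of the extended signature `𝓕 ∪ {•}` (with `•` the fresh
constant `none`). -/
def arB {F : Type} (ar : F → ℕ) : Option F → ℕ
  | none => 0
  | some f => ar f

/-- The term `•`. -/
def bulletTm {F : Type} {ar : F → ℕ} : Term (Option F) (arB ar) :=
  Term.app none Fin.elim0

/-- The embedding of `𝒯(𝓕)`-terms into terms over `𝓕 ∪ {•}`. -/
def liftB {F : Type} {ar : F → ℕ} : Term F ar → Term (Option F) (arB ar) :=
  Term.relabel some (fun _ => rfl)

/-- A TRS over `𝓕` viewed as a TRS over `𝓕 ∪ {•}`. -/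
def TRS.liftB {F : Type} {ar : F → ℕ} (R : TRS F ar) : TRS (Option F) (arB ar) :=
  R.relabel some (fun _ => rfl)

/-- The TRS `ℛ• = ℛ ∪ {• → •}` over the signature `𝓕 ∪ {•}`. -/
def TRS.bullet {F : Type} {ar : F → ℕ} (R : TRS F ar) : TRS (Option F) (arB ar) where
  rules := R.liftB.rules ∪ {(bulletTm, bulletTm)}
  finite := R.liftB.finite.union (Set.finite_singleton _)
  lhs_not_var := by
    rintro lr (h | h) n hn
    · exact R.liftB.lhs_not_var lr h n hn
    · rw [Set.mem_singleton_iff] at h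
      rw [h] at hn
      cases hn

/-! ## The automaton `𝒟(ℛ)` -/

/-- For a symbol `g` and sets of states `Ss` for the arguments, the set
`g(S₁,…,Sₙ)↓` of states reachable from `g` applied to states chosen from the `Ssᵢ`. -/
def oneStep {G : Type} {arG : G → ℕ} {Q : Type} (Γ : Set (TARule G arG Q)) (g : G)
    (Ss : Fin (arG g) → Set Q) : Set Q :=
  { q | ∃ qs : Fin (arG g) → Q, (∀ i, qs i ∈ Ss i) ∧ (⟨g, qs, q⟩ : TARule G arG Q) ∈ Γ }

/-- `t↓` for a ground term `t`: the set of states reachable from `t`. -/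
def dn {G : Type} {arG : G → ℕ} {Q : Type} (Γ : Set (TARule G arG Q))
    (t : Term G arG) : Set Q :=
  { q | Reaches Γ t q }

/-- There is a rewrite rule with left-hand side `g(l₁,…,lₙ)` such that
`⟪lᵢ⟫ ∈ Ssᵢ` for all `i`. -/
def LhsMatch {G : Type} {arG : G → ℕ} {Q : Type} (Rg : TRS G arG)
    (enc2 : Term G arG → Q) (g : G) (Ss : Fin (arG g) → Set Q) : Prop :=
  ∃ (ls : Fin (arG g) → Term G arG) (r : Term G arG),
    (Term.app g ls, r) ∈ Rg.rules ∧ ∀ i, enc2 (stPattern (ls i)) ∈ Ss i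

/-- The transition rules of the automaton `𝒟(ℛ)` over `𝓕`, built from the transition
rules `Γ'` of `𝒞'_{NF}(ℛ)` over `𝓕 ∪ {•}`. -/
def DTrans {F : Type} {ar : F → ℕ} {Q : Type} (Rb : TRS (Option F) (arB ar))
    (Γ' : Set (TARule (Option F) (arB ar) Q))
    (enc enc2 : Term (Option F) (arB ar) → Q) :
    Set (TARule F ar (Set Q × Set Q)) :=
  { ρ | ∃ (f : F) (SP : Fin (ar f) → Set Q × Set Q) (P1 P2 : Set Q),
      P1 ⊆ (⋃ i : Fin (ar f), oneStep Γ' (some f)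
              (fun j => @ite _ (j = i) (instDecidableEqFin _ j i) (SP j).2 (SP j).1)) ∧
      (∀ (i : Fin (ar f)), ∀ q ∈ (SP i).2,
        (P1 ∩ oneStep Γ' (some f) (fun j => @ite _ (j = i) (instDecidableEqFin _ j i) {q} (SP j).1)).Nonempty) ∧
      ((LhsMatch Rb enc2 (some f) (fun i => (SP i).1) ∧ P2 = {enc (Term.var 0)}) ∨
       (¬ LhsMatch Rb enc2 (some f) (fun i => (SP i).1) ∧ P2 = (∅ : Set Q))) ∧
      ρ = ⟨f, SP, (oneStep Γ' (some f) (fun i => (SP i).1), P1 ∪ P2)⟩ }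

/-- The automaton `𝒟(ℛ)`: final states are the pairs `[S,P]` with `q_r ∈ S` and
`P ⊆ Q_f`. -/
def DAutomaton {F : Type} {ar : F → ℕ} {Q : Type} (Rb : TRS (Option F) (arB ar))
    (Γ' : Set (TARule (Option F) (arB ar) Q))
    (enc enc2 : Term (Option F) (arB ar) → Q) (qr : Q) (Qf : Set Q) :
    TreeAutomaton F ar (Set Q × Set Q) where
  trans := DTrans Rb Γ' enc enc2
  final := { SP | qr ∈ SP.1 ∧ SP.2 ⊆ Qf }

/-! ## Growing approximations -/

/-- `VarRepl t t'` : `t'` is obtained from `t` by replacing occurrences of variables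
by (possibly other) variables. -/
inductive VarRepl {F : Type} {ar : F → ℕ} : Term F ar → Term F ar → Prop
  | var (n m : ℕ) : VarRepl (Term.var n) (Term.var m)
  | app (f : F) (ts ts' : Fin (ar f) → Term F ar) :
      (∀ i, VarRepl (ts i) (ts' i)) → VarRepl (Term.app f ts) (Term.app f ts')

/-- `Rg` is a growing approximation of `R`: a right-linear growing TRS obtained from
`R` by replacing, in each right-hand side, occurrences of variables by variables not
occurring in the corresponding left-hand side. -/
def IsGrowingApprox {F : Type} {ar : F → ℕ} (R Rg : TRS F ar) : Prop :=
  Rg.RightLinear ∧ Rg.Growing ∧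
  (∀ lr ∈ Rg.rules, ∃ lr' ∈ R.rules, lr.1 = lr'.1 ∧ VarRepl lr'.2 lr.2 ∧
      ∀ n ∈ lr.2.vars, n ∉ lr.1.vars) ∧
  (∀ lr ∈ R.rules, ∃ lr' ∈ Rg.rules, lr.1 = lr'.1 ∧ VarRepl lr.2 lr'.2 ∧
      ∀ n ∈ lr'.2.vars, n ∉ lr'.1.vars)

/-! ## The signature `𝓖 = 𝓕 ∪ {f° : f ∈ 𝓕}` -/

/-- The arity function of the signature `𝓕 ∪ {f° : f ∈ 𝓕}` (`inl f` is `f`,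
`inr f` is `f°`). -/
def arC {F : Type} (ar : F → ℕ) : F ⊕ F → ℕ
  | Sum.inl f => ar f
  | Sum.inr f => ar f

/-- The embedding of `𝒯(𝓕)`-terms into terms over `𝓕 ∪ {f° : f ∈ 𝓕}`. -/
def liftC {F : Type} {ar : F → ℕ} : Term F ar → Term (F ⊕ F) (arC ar) :=
  Term.relabel Sum.inl (fun _ => rfl)

/-- `t°`: mark the root symbol of `t`. -/
def circTm {F : Type} {ar : F → ℕ} : Term F ar → Term (F ⊕ F) (arC ar)
  | Term.var n => Term.var n
  | Term.app f ts => Term.app (Sum.inr f) fun i => liftC (ts i)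

/-- A TRS over `𝓕` viewed as a TRS over `𝓕 ∪ {f° : f ∈ 𝓕}`. -/
def TRS.liftC {F : Type} {ar : F → ℕ} (R : TRS F ar) : TRS (F ⊕ F) (arC ar) :=
  R.relabel Sum.inl (fun _ => rfl)

/-- The TRS `𝒮° = 𝒮 ∪ {l° → r | l → r ∈ 𝒮}` over the signature `𝓕 ∪ {f° : f ∈ 𝓕}`. -/
def TRS.circ {F : Type} {ar : F → ℕ} (S : TRS F ar) : TRS (F ⊕ F) (arC ar) where
  rules := S.liftC.rules ∪ (fun lr => (circTm lr.1, _root_.liftC lr.2)) '' S.rules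
  finite := S.liftC.finite.union (S.finite.image _)
  lhs_not_var := by
    rintro lr (h | ⟨lr0, h0, rfl⟩) n hn
    · exact S.liftC.lhs_not_var lr h n hn
    · dsimp only at hn
      cases h1 : lr0.1 with
      | var m => exact absurd h1 (S.lhs_not_var lr0 h0 m)
      | app f ts =>
          rw [h1] at hn
          simp only [circTm] at hn
          cases hn

/-- The transitions added to `ℬ(𝒮°)` to obtain `𝒜_{REDEX_{𝒮°}}`:
`f(⟨l₁⟩,…,⟨lₙ⟩) → q_f` and `f°(⟨l₁⟩,…,⟨lₙ⟩) → q_f` for each left-hand side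
`f(l₁,…,lₙ)` of a rule of `𝒮`. -/
def CircRedexRules {F : Type} {ar : F → ℕ} {Q : Type} (S : TRS F ar)
    (enc : Term (F ⊕ F) (arC ar) → Q) (qf : Q) : Set (TARule (F ⊕ F) (arC ar) Q) :=
  { ρ | ∃ (f : F) (ls : Fin (ar f) → Term F ar) (r : Term F ar),
      (Term.app f ls, r) ∈ S.rules ∧
      (ρ = ⟨Sum.inl f, fun i => enc (stPattern (liftC (ls i))), qf⟩ ∨
       ρ = ⟨Sum.inr f, fun i => enc (stPattern (liftC (ls i))), qf⟩) }

/-! ## The automaton `𝒟'(ℛ,𝒮)` -/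

/-- The data of the construction of `𝒞'_{RS_{𝒮°}}(ℛ)`: the saturated automaton
`𝒞_{RS_{𝒮°}}(ℛ)`, a fresh copy `⟪t⟫` (encoded by `enc2`, with `⟪x⟫ = ⟨x⟩`) of the
states of `ℬ(ℛ)`, and an automaton `𝒞_{REDEX_𝒮}(𝒮)` (transitions `Etrans`, final
states `Qf'`) recognizing the non-`𝒮`-root-stable ground terms of `𝒯(𝓕)`. -/
structure CrsSetup {F : Type} [Fintype F] {ar : F → ℕ} (Q : Type) [Fintype Q]
    (R S : TRS F ar) extends CSetup Q R.liftC (TRS.RSset S.circ) where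
  enc2 : Term (F ⊕ F) (arC ar) → Q
  henc2 : Set.InjOn enc2 (BStateSet R.liftC)
  hx : enc2 (Term.var 0) = enc (Term.var 0)
  hfresh2 : (enc2 '' (BStateSet R.liftC \ {Term.var 0})) ∩
              (QA ∪ enc '' BStateSet R.liftC) = ∅
  Etrans : Set (TARule (F ⊕ F) (arC ar) Q)
  Qf' : Set Q
  hQf' : Qf' ⊆ statesOf Etrans
  hEfresh : statesOf Etrans ∩
      (QA ∪ enc '' BStateSet R.liftC ∪ enc2 '' (BStateSet R.liftC \ {Term.var 0})) = ∅
  hE : ∀ t : Term (F ⊕ F) (arC ar),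
      (t.Ground ∧ ∃ q ∈ Qf', Reaches Etrans t q) ↔
      (∃ s : Term F ar, t = liftC s ∧ s.Ground ∧ ¬ S.RootStable s)

namespace CrsSetup

variable {F : Type} [Fintype F] {ar : F → ℕ} {Q : Type} [Fintype Q] {R S : TRS F ar}

/-- The transition rules `Γ'` of the automaton `𝒞'_{RS_{𝒮°}}(ℛ)`. -/
def Γ' (C : CrsSetup Q R S) : Set (TARule (F ⊕ F) (arC ar) Q) :=
  C.toCSetup.Γsat ∪ BMatch R.liftC C.enc2 ∪ C.Etrans

end CrsSetup

/-- The transition rules of the automaton `𝒟'(ℛ,𝒮)` over `𝓕`, built from the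
transition rules `Γ'` of `𝒞'_{RS_{𝒮°}}(ℛ)`. -/
def DTransRS {F : Type} {ar : F → ℕ} {Q : Type} (Rg : TRS (F ⊕ F) (arC ar))
    (Γ' : Set (TARule (F ⊕ F) (arC ar) Q)) (enc2 : Term (F ⊕ F) (arC ar) → Q) :
    Set (TARule F ar (Set Q × Set Q)) :=
  { ρ | ∃ (f : F) (SP : Fin (ar f) → Set Q × Set Q) (P1 P2 : Set Q),
      P1 ⊆ (⋃ i : Fin (ar f), oneStep Γ' (Sum.inl f)
              (fun j => @ite _ (j = i) (instDecidableEqFin _ j i) (SP j).2 (SP j).1)) ∧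
      (∀ (i : Fin (ar f)), ∀ q ∈ (SP i).2,
        (P1 ∩ oneStep Γ' (Sum.inl f) (fun j => @ite _ (j = i) (instDecidableEqFin _ j i) {q} (SP j).1)).Nonempty) ∧
      ((LhsMatch Rg enc2 (Sum.inl f) (fun i => (SP i).1) ∧ P2.Nonempty ∧
          P2 ⊆ oneStep Γ' (Sum.inr f) (fun i => (SP i).1)) ∨
       (¬ LhsMatch Rg enc2 (Sum.inl f) (fun i => (SP i).1) ∧ P2 = (∅ : Set Q))) ∧
      ρ = ⟨f, SP, (oneStep Γ' (Sum.inl f) (fun i => (SP i).1), P1 ∪ P2)⟩ }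

/-- The automaton `𝒟'(ℛ,𝒮)`: final states are the pairs `[S,P]` with
`S ∩ Q_f' ≠ ∅` and `P ⊆ Q_f`. -/
def DAutomatonRS {F : Type} {ar : F → ℕ} {Q : Type} (Rg : TRS (F ⊕ F) (arC ar))
    (Γ' : Set (TARule (F ⊕ F) (arC ar) Q)) (enc2 : Term (F ⊕ F) (arC ar) → Q)
    (Qf' Qf : Set Q) : TreeAutomaton F ar (Set Q × Set Q) where
  trans := DTransRS Rg Γ' enc2
  final := { SP | (SP.1 ∩ Qf').Nonempty ∧ SP.2 ⊆ Qf }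

/-! ### Auxiliary lemmas for statement3 -/

namespace Term

variable {F : Type} {ar : F → ℕ}

lemma ground_app_iff {f : F} {ts : Fin (ar f) → Term F ar} :
    (Term.app f ts).Ground ↔ ∀ i, (ts i).Ground := by
  simp only [Ground, vars, Finset.eq_empty_iff_forall_notMem, Finset.mem_biUnion,
    Finset.mem_univ, true_and, not_exists]
  exact forall_comm

lemma not_ground_var (n : ℕ) : ¬ (Term.var n : Term F ar).Ground := by
  simp [Ground, vars]

lemma subst_ground {t : Term F ar} (h : t.Ground) (σ : ℕ → Term F ar) :
    t.subst σ = t := by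
  induction t with
  | var n => exact absurd h (not_ground_var n)
  | app f ts ih =>
    rw [ground_app_iff] at h
    simp only [subst]
    congr 1
    funext i
    exact ih i (h i)

lemma ground_subst_const {t : Term F ar} {σ : ℕ → Term F ar}
    (hσ : ∀ n, (σ n).Ground) : (t.subst σ).Ground := by
  induction t with
  | var n => exact hσ n
  | app f ts ih =>
    rw [show (app f ts).subst σ = app f (fun i => (ts i).subst σ) from rfl, ground_app_iff]
    exact ih

lemma ground_of_subst_mem {l : Term F ar} {σ : ℕ → Term F ar}
    (h : (l.subst σ).Ground) : ∀ n ∈ l.vars, (σ n).Ground := by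
  induction l with
  | var m =>
    intro n hn
    simp only [vars, Finset.mem_singleton] at hn
    subst hn
    exact h
  | app f ts ih =>
    intro n hn
    simp only [vars, Finset.mem_biUnion, Finset.mem_univ, true_and] at hn
    obtain ⟨i, hi⟩ := hn
    rw [show (app f ts).subst σ = app f (fun i => (ts i).subst σ) from rfl,
      ground_app_iff] at h
    exact ih i (h i) n hi

lemma subst_subst (t : Term F ar) (σ γ : ℕ → Term F ar) :
    (t.subst σ).subst γ = t.subst (fun n => (σ n).subst γ) := by
  induction t with
  | var n => rfl
  | app f ts ih =>
    simp only [subst]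
    congr 1
    funext i
    exact ih i

lemma mem_vars_iff_count {t : Term F ar} {n : ℕ} : n ∈ t.vars ↔ t.count n ≠ 0 := by
  induction t with
  | var m =>
    simp only [vars, Finset.mem_singleton, count]
    constructor
    · rintro rfl; simp
    · intro h; by_contra hne; rw [if_neg (by omega)] at h; exact h rfl
  | app f ts ih =>
    simp only [vars, Finset.mem_biUnion, Finset.mem_univ, true_and, count]
    rw [Ne, Finset.sum_eq_zero_iff]
    push_neg
    constructor
    · rintro ⟨i, hi⟩; exact ⟨i, Finset.mem_univ i, (ih i).1 hi⟩
    · rintro ⟨i, _, hi⟩; exact ⟨i, (ih i).2 hi⟩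

lemma linear_arg {f : F} {ts : Fin (ar f) → Term F ar}
    (h : (Term.app f ts).Linear) (i : Fin (ar f)) : (ts i).Linear := by
  intro n
  have hn := h n
  simp only [count] at hn
  exact le_trans (Finset.single_le_sum (f := fun j => (ts j).count n)
    (fun _ _ => Nat.zero_le _) (Finset.mem_univ i)) hn

lemma linear_disjoint {f : F} {ts : Fin (ar f) → Term F ar}
    (h : (Term.app f ts).Linear) {n : ℕ} {i j : Fin (ar f)}
    (hi : n ∈ (ts i).vars) (hj : n ∈ (ts j).vars) : i = j := by
  by_contra hij
  have h1 : 1 ≤ (ts i).count n := Nat.one_le_iff_ne_zero.2 (mem_vars_iff_count.1 hi)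
  have h2 : 1 ≤ (ts j).count n := Nat.one_le_iff_ne_zero.2 (mem_vars_iff_count.1 hj)
  have hn := h n
  simp only [count] at hn
  have hle : (ts i).count n + (ts j).count n ≤ ∑ k, (ts k).count n := by
    have hsub := Finset.sum_le_sum_of_subset (f := fun k => (ts k).count n)
      (Finset.subset_univ {i, j})
    rwa [Finset.sum_pair hij] at hsub
  omega

lemma subtermAt_append : ∀ {p p' : List ℕ} {s t w : Term F ar},
    s.subtermAt p = some t → t.subtermAt p' = some w →
    s.subtermAt (p ++ p') = some w := by
  intro p
  induction p with
  | nil =>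
    intro p' s t w h h'
    simp only [subtermAt] at h
    injection h with h
    subst h
    simpa using h'
  | cons i p ih =>
    intro p' s t w h h'
    cases s with
    | var m => simp [subtermAt] at h
    | app f ts =>
      simp only [subtermAt] at h ⊢
      split at h
      · rw [List.cons_append]; simp only [subtermAt]; rw [dif_pos ‹i < ar f›]
        exact ih h h'
      · exact absurd h (by simp)

lemma subtermAt_ground : ∀ {p : List ℕ} {s t : Term F ar},
    s.subtermAt p = some t → s.Ground → t.Ground := by
  intro p
  induction p with
  | nil =>
    intro s t h hg
    simp only [subtermAt] at h
    injection h with h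
    subst h
    exact hg
  | cons i p ih =>
    intro s t h hg
    cases s with
    | var m => simp [subtermAt] at h
    | app f ts =>
      simp only [subtermAt] at h
      split at h
      · exact ih h (ground_app_iff.1 hg _)
      · exact absurd h (by simp)

lemma replaceAt_self : ∀ {p : List ℕ} {s u : Term F ar},
    s.subtermAt p = some u → s.replaceAt p u = some s := by
  intro p
  induction p with
  | nil =>
    intro s u h
    simp only [subtermAt] at h
    injection h with h
    subst h
    simp [replaceAt]
  | cons i p ih =>
    intro s u h
    cases s with
    | var m => simp [subtermAt] at h
    | app f ts =>
      simp only [subtermAt] at h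
      split at h
      · simp only [replaceAt]
        rw [dif_pos ‹i < ar f›, ih h]
        simp [Function.update_eq_self]
      · exact absurd h (by simp)

lemma subtermAt_subst {γ : ℕ → Term F ar} : ∀ {p : List ℕ} {s u : Term F ar},
    s.subtermAt p = some u → (s.subst γ).subtermAt p = some (u.subst γ) := by
  intro p
  induction p with
  | nil =>
    intro s u h
    simp only [subtermAt] at h ⊢
    injection h with h
    subst h
    rfl
  | cons i p ih =>
    intro s u h
    cases s with
    | var m => simp [subtermAt] at h
    | app f ts =>
      simp only [subtermAt] at h
      split at h
      · rw [show (app f ts).subst γ = app f (fun j => (ts j).subst γ) from rfl]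
        simp only [subtermAt]
        rw [dif_pos ‹i < ar f›]
        exact ih h
      · exact absurd h (by simp)

lemma replaceAt_subst {γ : ℕ → Term F ar} : ∀ {p : List ℕ} {s v t : Term F ar},
    s.replaceAt p v = some t → (s.subst γ).replaceAt p (v.subst γ) = some (t.subst γ) := by
  intro p
  induction p with
  | nil =>
    intro s v t h
    simp only [replaceAt] at h ⊢
    injection h with h
    subst h
    rfl
  | cons i p ih =>
    intro s v t h
    cases s with
    | var m => simp [replaceAt] at h
    | app f ts =>
      simp only [replaceAt] at h
      split at h
      · obtain ⟨s₁, hs₁, ht⟩ := Option.map_eq_some_iff.1 h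
        rw [show (app f ts).subst γ = app f (fun j => (ts j).subst γ) from rfl]
        simp only [replaceAt]
        rw [dif_pos ‹i < ar f›, ih hs₁]
        simp only [Option.map_some]
        rw [← ht]
        congr 1
        rw [show (app f (Function.update ts ⟨i, ‹i < ar f›⟩ s₁)).subst γ =
          app f (fun j => ((Function.update ts ⟨i, ‹i < ar f›⟩ s₁) j).subst γ) from rfl]
        congr 1
        funext j
        rcases eq_or_ne j ⟨i, ‹i < ar f›⟩ with rfl | hj
        · simp
        · simp [Function.update_of_ne hj]
      · exact absurd h (by simp)

end Term

lemma Rewrites.subst_closed {F : Type} {ar : F → ℕ}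
    {R : Set (Term F ar × Term F ar)} {s t : Term F ar} (γ : ℕ → Term F ar)
    (h : Rewrites R s t) : Rewrites R (s.subst γ) (t.subst γ) := by
  obtain ⟨p, l, r, σ, hR, hsub, hrep⟩ := h
  refine ⟨p, l, r, fun n => (σ n).subst γ, hR, ?_, ?_⟩
  · have := Term.subtermAt_subst (γ := γ) hsub
    rwa [Term.subst_subst] at this
  · have := Term.replaceAt_subst (γ := γ) hrep
    rwa [Term.subst_subst] at this

lemma Reaches.mono {F : Type} {ar : F → ℕ} {Q : Type} {Γ Γ' : Set (TARule F ar Q)}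
    (h : Γ ⊆ Γ') {t : Term F ar} {q : Q} (ht : Reaches Γ t q) : Reaches Γ' t q := by
  induction ht with
  | app hts hmem ih => exact Reaches.app ih (h hmem)

lemma ReachesT.mono {F : Type} {ar : F → ℕ} {Q : Type} {Γ Γ' : Set (TARule F ar Q)}
    (h : Γ ⊆ Γ') {θ : ℕ → Q} {t : Term F ar} {q : Q} (ht : ReachesT Γ θ t q) :
    ReachesT Γ' θ t q := by
  induction ht with
  | var n => exact ReachesT.var n
  | app hts hmem ih => exact ReachesT.app ih (h hmem)

lemma ReachesT.congrVars {F : Type} {ar : F → ℕ} {Q : Type} {Γ : Set (TARule F ar Q)}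
    {θ θ' : ℕ → Q} {t : Term F ar} {q : Q} (ht : ReachesT Γ θ t q)
    (hagree : ∀ n ∈ t.vars, θ n = θ' n) : ReachesT Γ θ' t q := by
  induction ht with
  | var n =>
    rw [hagree n (by simp [Term.vars])]
    exact ReachesT.var n
  | @app f ts qs q hts hmem ih =>
    refine ReachesT.app (fun i => ih i fun n hn => hagree n ?_) hmem
    simp only [Term.vars, Finset.mem_biUnion, Finset.mem_univ, true_and]
    exact ⟨i, hn⟩

/-- Decomposition of a reachability derivation for a ground instance of a linear term. -/
lemma reaches_subst_decompose {F : Type} {ar : F → ℕ} {Q : Type}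
    {Γ : Set (TARule F ar Q)} :
    ∀ {r : Term F ar}, r.Linear → ∀ {σ : ℕ → Term F ar} {q : Q},
    Reaches Γ (r.subst σ) q →
    ∃ θ : ℕ → Q, ReachesT Γ θ r q ∧ ∀ n ∈ r.vars, Reaches Γ (σ n) (θ n) := by
  intro r
  induction r with
  | var n =>
    intro _ σ q h
    exact ⟨fun _ => q, ReachesT.var n, fun m hm => by
      simp only [Term.vars, Finset.mem_singleton] at hm
      subst hm
      exact h⟩
  | app f ts ih =>
    intro hlin σ q h
    rw [show (Term.app f ts).subst σ = Term.app f (fun i => (ts i).subst σ) from rfl] at h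
    cases h with
    | @app _ _ qs _ hts hmem =>
      choose θs h1 h2 using fun i => ih i (Term.linear_arg hlin i) (hts i)
      classical
      refine ⟨fun n => if h : ∃ i, n ∈ (ts i).vars then θs h.choose n else q, ?_, ?_⟩
      · refine ReachesT.app (fun i => (h1 i).congrVars fun n hn => ?_) hmem
        have hex : ∃ j, n ∈ (ts j).vars := ⟨i, hn⟩
        have hch : hex.choose = i := Term.linear_disjoint hlin hex.choose_spec hn
        simp only [dif_pos hex, hch]
      · intro n hn
        simp only [Term.vars, Finset.mem_biUnion, Finset.mem_univ, true_and] at hn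
        obtain ⟨i, hi⟩ := hn
        have hex : ∃ j, n ∈ (ts j).vars := ⟨i, hi⟩
        simp only [dif_pos hex]
        exact h2 hex.choose n hex.choose_spec

/-- Decomposition of a reachability derivation at a position. -/
lemma reaches_replaceAt {F : Type} {ar : F → ℕ} {Q : Type} {Γ : Set (TARule F ar Q)} :
    ∀ {p : List ℕ} {s v s' : Term F ar} {q : Q},
    s.replaceAt p v = some s' → Reaches Γ s' q →
    ∃ q₀, Reaches Γ v q₀ ∧ ∀ w, Reaches Γ w q₀ →
      ∀ s'', s.replaceAt p w = some s'' → Reaches Γ s'' q := by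
  intro p
  induction p with
  | nil =>
    intro s v s' q h hq
    simp only [Term.replaceAt] at h
    injection h with h
    subst h
    exact ⟨q, hq, fun w hw s'' h'' => by
      simp only [Term.replaceAt] at h''
      injection h'' with h''
      subst h''
      exact hw⟩
  | cons i p ih =>
    intro s v s' q h hq
    cases s with
    | var m => simp [Term.replaceAt] at h
    | app f ts =>
      simp only [Term.replaceAt] at h
      split at h
      · obtain ⟨s₁, hs₁, hs'⟩ := Option.map_eq_some_iff.1 h
        subst hs'
        cases hq with
        | @app _ _ qs _ hts hmem =>
          have hreach₁ : Reaches Γ s₁ (qs ⟨i, ‹i < ar f›⟩) := by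
            have := hts ⟨i, ‹i < ar f›⟩
            rwa [Function.update_self] at this
          obtain ⟨q₀, hv, hprop⟩ := ih hs₁ hreach₁
          refine ⟨q₀, hv, fun w hw s'' h'' => ?_⟩
          simp only [Term.replaceAt] at h''
          rw [dif_pos ‹i < ar f›] at h''
          obtain ⟨s₂, hs₂, hs''⟩ := Option.map_eq_some_iff.1 h''
          subst hs''
          refine Reaches.app (fun j => ?_) hmem
          rcases eq_or_ne j ⟨i, ‹i < ar f›⟩ with rfl | hj
          · rw [Function.update_self]
            exact hprop w hw s₂ hs₂
          · rw [Function.update_of_ne hj]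
            have := hts j
            rwa [Function.update_of_ne hj] at this
      · exact absurd h (by simp)

section SatLemmas

variable {G : Type} {arG : G → ℕ} {Q : Type} {R : TRS G arG} {enc : Term G arG → Q}
  {Qc : Set Q} {Γ0 : Set (TARule G arG Q)}

lemma satStep_iterate_mono {m n : ℕ} (h : m ≤ n) :
    (satStep R enc Qc)^[m] Γ0 ⊆ (satStep R enc Qc)^[n] Γ0 := by
  induction h with
  | refl => exact subset_rfl
  | @step k _ ih =>
    refine ih.trans ?_
    rw [Function.iterate_succ_apply']
    exact Set.subset_union_left

lemma satStep_iterate_le_satGamma (n : ℕ) :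
    (satStep R enc Qc)^[n] Γ0 ⊆ satGamma R enc Qc Γ0 :=
  Set.subset_iUnion (fun n => (satStep R enc Qc)^[n] Γ0) n

lemma reaches_satGamma_exists {t : Term G arG} {q : Q}
    (h : Reaches (satGamma R enc Qc Γ0) t q) :
    ∃ n, Reaches ((satStep R enc Qc)^[n] Γ0) t q := by
  induction h with
  | @app f ts qs q hts hmem ih =>
    choose g hg using ih
    simp only [satGamma, Set.mem_iUnion] at hmem
    obtain ⟨m, hm⟩ := hmem
    refine ⟨(Finset.univ.sup g) ⊔ m, Reaches.app (qs := qs) (fun i => ?_) ?_⟩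
    · exact (hg i).mono (satStep_iterate_mono
        (le_trans (Finset.le_sup (Finset.mem_univ i)) le_sup_left))
    · exact satStep_iterate_mono le_sup_right hm

lemma targets_satStep {Γ : Set (TARule G arG Q)}
    (h : ∀ ρ ∈ Γ, ρ.2.2 ∈ Qc) : ∀ ρ ∈ satStep R enc Qc Γ, ρ.2.2 ∈ Qc := by
  rintro ρ (hρ | ⟨f, ls, r, θ, q, hR, hθ, hr, rfl⟩)
  · exact h ρ hρ
  · cases hr with
    | var n => exact hθ n (by simp [Term.vars])
    | app _ hmem =>
      have hq := h _ hmem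
      exact hq

lemma targets_satStep_iterate (h0 : ∀ ρ ∈ Γ0, ρ.2.2 ∈ Qc) (n : ℕ) :
    ∀ ρ ∈ (satStep R enc Qc)^[n] Γ0, ρ.2.2 ∈ Qc := by
  induction n with
  | zero => exact h0
  | succ n ih =>
    rw [Function.iterate_succ_apply']
    exact targets_satStep ih

lemma reaches_target {Γ : Set (TARule G arG Q)} (h : ∀ ρ ∈ Γ, ρ.2.2 ∈ Qc)
    {t : Term G arG} {q : Q} (ht : Reaches Γ t q) : q ∈ Qc := by
  cases ht with
  | app _ hmem =>
    have hq := h _ hmem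
    exact hq

end SatLemmas

section BLemmas

variable {G : Type} {arG : G → ℕ} {Q : Type} {R : TRS G arG} {enc : Term G arG → Q}

lemma var0_mem_BStateSet : (Term.var 0 : Term G arG) ∈ BStateSet R :=
  Or.inr rfl

lemma stPattern_mem_BStateSet {w : Term G arG} (h : w ∈ SR R) :
    stPattern w ∈ BStateSet R :=
  Or.inl ⟨w, h, rfl⟩

lemma SR_subterm {t w : Term G arG} (ht : t ∈ SR R) (h : w.IsSubtermOf t) :
    w ∈ SR R := by
  obtain ⟨lr, hlr, f, ts, hl, i, p, hp⟩ := ht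
  obtain ⟨p', hp'⟩ := h
  exact ⟨lr, hlr, f, ts, hl, i, p ++ p', Term.subtermAt_append hp hp'⟩

lemma arg_mem_SR {g : G} {us : Fin (arG g) → Term G arG}
    (h : Term.app g us ∈ SR R) (j : Fin (arG g)) : us j ∈ SR R := by
  refine SR_subterm h ⟨[j.val], ?_⟩
  simp only [Term.subtermAt]
  rw [dif_pos j.isLt]

lemma reaches_bprop {Γ : Set (TARule G arG Q)} (h : BProp enc ⊆ Γ)
    {t : Term G arG} (hg : t.Ground) : Reaches Γ t (enc (Term.var 0)) := by
  induction t with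
  | var n => exact absurd hg (Term.not_ground_var n)
  | app f ts ih =>
    exact Reaches.app (fun i => ih i (Term.ground_app_iff.1 hg i)) (h ⟨f, rfl⟩)

lemma reaches_bmatch {Γ : Set (TARule G arG Q)} (hm : BMatch R enc ⊆ Γ)
    (hp : BProp enc ⊆ Γ) :
    ∀ {u : Term G arG}, u ∈ SR R → ∀ {σ : ℕ → Term G arG}, (u.subst σ).Ground →
    Reaches Γ (u.subst σ) (enc (stPattern u)) := by
  intro u
  induction u with
  | var n =>
    intro _ σ hg
    exact reaches_bprop hp hg
  | app g us ih =>
    intro hu σ hg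
    rw [show (Term.app g us).subst σ = Term.app g (fun i => (us i).subst σ) from rfl] at hg ⊢
    refine Reaches.app (qs := fun i => enc (stPattern (us i))) (fun i => ?_)
      (hm ⟨g, us, hu, rfl⟩)
    exact ih i (arg_mem_SR hu i) (Term.ground_app_iff.1 hg i)

end BLemmas

section Backward

variable {G : Type} {arG : G → ℕ} {Q : Type}

/-- The key lemma: the saturated automaton's reachability relation is closed under
backward rewriting from ground terms. -/
lemma backward_step (R : TRS G arG) (hrl : R.RightLinear) (enc : Term G arG → Q)
    (A : TreeAutomaton G arG Q) {QA : Set Q}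
    (hAstates : ∀ ρ ∈ A.trans, ρ.2.2 ∈ QA ∧ ∀ i, ρ.2.1 i ∈ QA)
    {u v : Term G arG} {q : Q} (hu : u.Ground) (h : Rewrites R.rules u v)
    (hv : Reaches (satGamma R enc (QA ∪ enc '' BStateSet R) (A.trans ∪ BTrans R enc)) v q) :
    Reaches (satGamma R enc (QA ∪ enc '' BStateSet R) (A.trans ∪ BTrans R enc)) u q := by
  set Qc : Set Q := QA ∪ enc '' BStateSet R with hQc
  set Γ0 : Set (TARule G arG Q) := A.trans ∪ BTrans R enc with hΓ0
  set Γs : Set (TARule G arG Q) := satGamma R enc Qc Γ0 with hΓs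
  have hΓ0sub : Γ0 ⊆ Γs := satStep_iterate_le_satGamma 0
  have htargets0 : ∀ ρ ∈ Γ0, ρ.2.2 ∈ Qc := by
    rintro ρ (hρ | hρ)
    · exact Or.inl (hAstates ρ hρ).1
    · rcases hρ with ⟨f, ts, hts, rfl⟩ | ⟨f, rfl⟩
      · exact Or.inr ⟨Term.app f ts, stPattern_mem_BStateSet hts, rfl⟩
      · exact Or.inr ⟨Term.var 0, var0_mem_BStateSet, rfl⟩
  obtain ⟨p, l, r, σ, hR, hsub, hrep⟩ := h
  -- decompose the derivation for v at position p
  obtain ⟨q₀, hr₀, hprop⟩ := reaches_replaceAt hrep hv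
  -- find a finite saturation stage
  obtain ⟨n, hrn⟩ := reaches_satGamma_exists hr₀
  set Γn : Set (TARule G arG Q) := (satStep R enc Qc)^[n] Γ0 with hΓn
  have hΓnsub : Γn ⊆ Γs := satStep_iterate_le_satGamma n
  have htargetsn : ∀ ρ ∈ Γn, ρ.2.2 ∈ Qc := targets_satStep_iterate htargets0 n
  -- decompose the derivation for rσ
  obtain ⟨θ, hθr, hθv⟩ := reaches_subst_decompose (hrl (l, r) hR) hrn
  have hθQc : ∀ m ∈ r.vars, θ m ∈ Qc := fun m hm =>
    reaches_target htargetsn (hθv m hm)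
  -- l is not a variable
  obtain ⟨f, ls, rfl⟩ : ∃ (f : G) (ls : Fin (arG f) → Term G arG), l = Term.app f ls := by
    cases l with
    | var m => exact absurd rfl (R.lhs_not_var (Term.var m, r) hR m)
    | app f ls => exact ⟨f, ls, rfl⟩
  -- the saturated rule
  have hrule : (⟨f, fun i => satArg enc θ r.vars (ls i), q₀⟩ : TARule G arG Q) ∈ Γs := by
    refine satStep_iterate_le_satGamma (n + 1) ?_
    rw [Function.iterate_succ_apply']
    exact Or.inr ⟨f, ls, r, θ, q₀, hR, hθQc, hθr, rfl⟩
  -- groundness facts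
  have hlg : ((Term.app f ls).subst σ).Ground := Term.subtermAt_ground hsub hu
  have hσg : ∀ m ∈ (Term.app f ls).vars, (σ m).Ground :=
    Term.ground_of_subst_mem hlg
  -- lσ reaches q₀
  have hlq : Reaches Γs ((Term.app f ls).subst σ) q₀ := by
    rw [show (Term.app f ls).subst σ = Term.app f (fun i => (ls i).subst σ) from rfl]
    refine Reaches.app (fun i => ?_) hrule
    cases hls : ls i with
    | var m =>
      have hmv : m ∈ (Term.app f ls).vars := by
        simp only [Term.vars, Finset.mem_biUnion, Finset.mem_univ, true_and]
        exact ⟨i, by rw [hls]; simp [Term.vars]⟩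
      simp only [satArg]
      split
      · exact ((hθv m ‹m ∈ r.vars›).mono hΓnsub)
      · exact reaches_bprop (fun ρ hρ => hΓ0sub (Or.inr (Or.inr hρ))) (hσg m hmv)
    | app g us =>
      have hmem : Term.app g us ∈ SR R :=
        ⟨(Term.app f ls, r), hR, f, ls, rfl, i, [], by rw [hls]; simp [Term.subtermAt]⟩
      have hground : ((Term.app g us).subst σ).Ground := by
        rw [show (Term.app f ls).subst σ = Term.app f (fun j => (ls j).subst σ) from rfl,
          Term.ground_app_iff] at hlg
        have := hlg i
        rwa [hls] at this
      have := reaches_bmatch (R := R) (enc := enc)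
        (fun ρ hρ => hΓ0sub (Or.inr (Or.inl hρ)))
        (fun ρ hρ => hΓ0sub (Or.inr (Or.inr hρ))) hmem hground
      simpa [satArg, stPattern] using this
  exact hprop _ hlq u (Term.replaceAt_self hsub)

end Backward

/-- Let `ℛ` be a right-linear TRS over `𝓖` and `𝒞_T(ℛ)` the automaton
obtained by saturating the union of `𝒜_T` and `ℬ(ℛ)`.  Then every ground term that
rewrites in `ℛ` to a term of `T` is accepted by `𝒞_T(ℛ)`. -/
theorem statement3 {G : Type} [Fintype G] {arG : G → ℕ} {Q : Type} [Fintype Q]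
    (R : TRS G arG) (hrl : R.RightLinear)
    (enc : Term G arG → Q) (henc : Set.InjOn enc (BStateSet R))
    (A : TreeAutomaton G arG Q) (QA : Set Q)
    (hAstates : ∀ ρ ∈ A.trans, ρ.2.2 ∈ QA ∧ ∀ i, ρ.2.1 i ∈ QA)
    (hfinal : A.final ⊆ QA)
    (hacc : ∀ q ∈ QA, ∃ s : Term G arG, s.Ground ∧ Reaches A.trans s q)
    (hshared : ∀ q ∈ QA ∩ enc '' BStateSet R, ∀ s : Term G arG,
        Reaches A.trans s q ↔ Reaches (BTrans R enc) s q)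
    (T : Set (Term G arG)) (hT : T = Lang A) :
    ∀ s : Term G arG, s.Ground → (∃ t ∈ T, RewritesStar R.rules s t) →
      ∃ q ∈ A.final,
        Reaches (satGamma R enc (QA ∪ enc '' BStateSet R) (A.trans ∪ BTrans R enc)) s q := by
  intro s hs hex
  obtain ⟨t, htT, hstar⟩ := hex
  rw [hT] at htT
  obtain ⟨htg, q, hqf, hq⟩ := htT
  refine ⟨q, hqf, ?_⟩
  have key : ∀ u : Term G arG, RewritesStar R.rules u t →
      Reaches (satGamma R enc (QA ∪ enc '' BStateSet R) (A.trans ∪ BTrans R enc))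
        (u.subst (fun _ => t)) q := by
    intro u hu
    induction hu using Relation.ReflTransGen.head_induction_on with
    | refl =>
      rw [Term.subst_ground htg]
      exact hq.mono fun ρ hρ =>
        satStep_iterate_le_satGamma (Γ0 := A.trans ∪ BTrans R enc) 0 (Or.inl hρ)
    | head hstep _ ih =>
      exact backward_step R hrl enc A hAstates
        (Term.ground_subst_const fun _ => htg)
        (Rewrites.subst_closed _ hstep) ih
  have hkey := key s hstar
  rwa [Term.subst_ground hs] at hkey
end

section
/- Let ℛ be a linear growing TRS over 𝓖, let 𝒞_T(ℛ) be the saturated automaton, and let s ∈ 𝒯(𝓖) with s →_{𝒞_T(ℛ)}* q. Then: (1) if q = ⟨t⟩ with t ∈ S_ℛ ∪ {x} then s ∈ (→_ℛ*)[Σ(t)], i.e., s rewrites in ℛ to a ground instance of t; and (2) if q is a final state then s ∈ (→_ℛ*)[T]. -/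
set_option maxHeartbeats 1000000

namespace Stmt4Aux
open Term

variable {F : Type} {ar : F → ℕ} {Q : Type}

lemma mem_vars_iff_count_pos (n : ℕ) : ∀ t : Term F ar, n ∈ t.vars ↔ 0 < t.count n := by
  intro t
  induction t with
  | var m =>
      simp only [Term.vars, Term.count, Finset.mem_singleton]
      constructor
      · rintro rfl; simp
      · intro h; by_contra hc; simp [Ne.symm hc] at h
  | app f ts ih =>
      simp only [Term.vars, Term.count, Finset.mem_biUnion, Finset.mem_univ, true_and]
      constructor
      · rintro ⟨i, hi⟩
        exact lt_of_lt_of_le ((ih i).1 hi) (Finset.single_le_sum (f := fun i => (ts i).count n) (fun _ _ => Nat.zero_le _) (Finset.mem_univ i))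
      · intro h
        by_contra hc
        push_neg at hc
        have : ∑ i, (ts i).count n = 0 := Finset.sum_eq_zero fun i _ => by
          have := (ih i).not.1 (hc i); omega
        omega

lemma ground_app {f : F} {ts : Fin (ar f) → Term F ar} :
    (Term.app f ts).Ground ↔ ∀ i, (ts i).Ground := by
  simp [Term.Ground, Term.vars, Finset.eq_empty_iff_forall_notMem, Finset.mem_biUnion]
  tauto

lemma ground_subst {σ : ℕ → Term F ar} : ∀ {t : Term F ar},
    (∀ n ∈ t.vars, (σ n).Ground) → (t.subst σ).Ground := by
  intro t
  induction t with
  | var m => intro h; exact h m (by simp [Term.vars])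
  | app f ts ih =>
      intro h
      rw [Term.subst, ground_app]
      intro i
      exact ih i fun n hn => h n (by simp [Term.vars, Finset.mem_biUnion]; exact ⟨i, hn⟩)

lemma subst_congr {σ σ' : ℕ → Term F ar} : ∀ {t : Term F ar},
    (∀ n ∈ t.vars, σ n = σ' n) → t.subst σ = t.subst σ' := by
  intro t
  induction t with
  | var m => intro h; exact h m (by simp [Term.vars])
  | app f ts ih =>
      intro h
      simp only [Term.subst]
      congr 1
      funext i
      exact ih i fun n hn => h n (by simp [Term.vars, Finset.mem_biUnion]; exact ⟨i, hn⟩)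

lemma count_subterm (n : ℕ) : ∀ (p : List ℕ) (t s : Term F ar),
    t.subtermAt p = some s → s.count n ≤ t.count n := by
  intro p
  induction p with
  | nil => intro t s h; simp [Term.subtermAt] at h; subst h; exact le_refl _
  | cons i p ih =>
      intro t s h
      cases t with
      | var m => simp [Term.subtermAt] at h
      | app f ts =>
          rw [Term.subtermAt] at h
          split at h
          · rename_i hi
            calc s.count n ≤ (ts ⟨i, hi⟩).count n := ih _ _ h
              _ ≤ _ := by
                rw [Term.count]
                exact Finset.single_le_sum (f := fun j => (ts j).count n) (fun _ _ => Nat.zero_le _) (Finset.mem_univ _)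
          · exact absurd h (by simp)


lemma linear_of_subterm {t s : Term F ar} (hl : t.Linear) {p : List ℕ}
    (h : t.subtermAt p = some s) : s.Linear :=
  fun n => le_trans (count_subterm n p t s h) (hl n)

lemma subtermAt_append : ∀ (p q : List ℕ) (t : Term F ar),
    t.subtermAt (p ++ q) = (t.subtermAt p).bind (fun s => s.subtermAt q) := by
  intro p
  induction p with
  | nil => intro q t; simp [Term.subtermAt]
  | cons i p ih =>
      intro q t
      cases t with
      | var m => simp [Term.subtermAt]
      | app f ts =>
          rw [List.cons_append, Term.subtermAt, Term.subtermAt]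
          split
          · exact ih q _
          · simp

lemma subtermAt_arg {f : F} {ts : Fin (ar f) → Term F ar} (i : Fin (ar f)) :
    (Term.app f ts).subtermAt [(i : ℕ)] = some (ts i) := by
  rw [Term.subtermAt, dif_pos i.isLt]
  simp [Term.subtermAt]

lemma isSubtermOf_arg {f : F} {ts : Fin (ar f) → Term F ar} {u : Term F ar}
    (h : (Term.app f ts).IsSubtermOf u) (i : Fin (ar f)) : (ts i).IsSubtermOf u := by
  obtain ⟨p, hp⟩ := h
  exact ⟨p ++ [(i : ℕ)], by rw [subtermAt_append, hp]; simpa using subtermAt_arg i⟩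

lemma SR_self_arg {R : TRS F ar} {lr} (hlr : lr ∈ R.rules) {f : F}
    {ls : Fin (ar f) → Term F ar} (hl : lr.1 = Term.app f ls) (i : Fin (ar f)) :
    ls i ∈ SR R :=
  ⟨lr, hlr, f, ls, hl, i, ⟨[], by simp [Term.subtermAt]⟩⟩

lemma SR_args {R : TRS F ar} {f : F} {ts : Fin (ar f) → Term F ar}
    (h : Term.app f ts ∈ SR R) (i : Fin (ar f)) : ts i ∈ SR R := by
  obtain ⟨lr, hlr, g, ls, hl, j, hsub⟩ := h
  exact ⟨lr, hlr, g, ls, hl, j, isSubtermOf_arg hsub i⟩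

lemma SR_linear {R : TRS F ar} (hll : R.LeftLinear) {t : Term F ar} (ht : t ∈ SR R) :
    t.Linear := by
  obtain ⟨lr, hlr, g, ls, hl, j, p, hp⟩ := ht
  have h1 : lr.1.Linear := hll lr hlr
  rw [hl] at h1
  have h2 : (ls j).Linear := fun n => by
    refine le_trans ?_ (h1 n)
    rw [Term.count]
    exact Finset.single_le_sum (f := fun k => (ls k).count n) (fun _ _ => Nat.zero_le _) (Finset.mem_univ _)
  exact linear_of_subterm h2 hp

lemma linear_app_disjoint {f : F} {ts : Fin (ar f) → Term F ar}
    (hl : (Term.app f ts).Linear) {n : ℕ} {i j : Fin (ar f)}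
    (hi : n ∈ (ts i).vars) (hj : n ∈ (ts j).vars) : i = j := by
  by_contra hij
  have h := hl n
  rw [Term.count] at h
  rw [mem_vars_iff_count_pos] at hi hj
  have : 2 ≤ ∑ k, (ts k).count n := by
    calc 2 ≤ (ts i).count n + (ts j).count n := by omega
      _ = ∑ k ∈ ({i, j} : Finset (Fin (ar f))), (ts k).count n := (Finset.sum_pair (f := fun k => (ts k).count n) hij).symm
      _ ≤ _ := Finset.sum_le_sum_of_subset (Finset.subset_univ _)
  omega
lemma reaches_mono {Γ Γ' : Set (TARule F ar Q)} (h : Γ ⊆ Γ') :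
    ∀ {t : Term F ar} {q : Q}, Reaches Γ t q → Reaches Γ' t q := by
  intro t q hr
  induction hr with
  | app hts hrule ih => exact Reaches.app ih (h hrule)

lemma reachesT_subst {Γ : Set (TARule F ar Q)} {θ : ℕ → Q} {r : Term F ar} {q : Q}
    (h : ReachesT Γ θ r q) (σ : ℕ → Term F ar)
    (hσ : ∀ n ∈ r.vars, Reaches Γ (σ n) (θ n)) : Reaches Γ (r.subst σ) q := by
  induction h with
  | var n => exact hσ n (by simp [Term.vars])
  | app hts hrule ih =>
      rw [Term.subst]
      refine Reaches.app (fun i => ih i fun n hn => hσ n ?_) hrule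
      simp only [Term.vars, Finset.mem_biUnion, Finset.mem_univ, true_and]
      exact ⟨i, hn⟩

lemma ground_reaches_x {R : TRS F ar} {enc : Term F ar → Q} :
    ∀ {u : Term F ar}, u.Ground → Reaches (BTrans R enc) u (enc (Term.var 0)) := by
  intro u
  induction u with
  | var n => intro h; exact absurd h (by simp [Term.Ground, Term.vars])
  | app f ts ih =>
      intro h
      exact Reaches.app (fun i => ih i (ground_app.mp h i)) (Or.inr ⟨f, rfl⟩)

lemma stPattern_app {f : F} {ts : Fin (ar f) → Term F ar} :
    stPattern (Term.app f ts) = Term.app f ts := rfl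

lemma inst_reaches_pattern {R : TRS F ar} {enc : Term F ar → Q} :
    ∀ {t : Term F ar}, t ∈ SR R → ∀ σ : ℕ → Term F ar, (∀ n, (σ n).Ground) →
      Reaches (BTrans R enc) (t.subst σ) (enc (stPattern t)) := by
  intro t
  induction t with
  | var n => intro _ σ hσ; exact ground_reaches_x (hσ n)
  | app f ts ih =>
      intro ht σ hσ
      rw [Term.subst, stPattern_app]
      exact Reaches.app (fun i => ih i (SR_args ht i) σ hσ) (Or.inl ⟨f, ts, ht, rfl⟩)

lemma combine_subst {f : F} {ts : Fin (ar f) → Term F ar}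
    (hl : (Term.app f ts).Linear) (us : Fin (ar f) → Term F ar)
    (σs : Fin (ar f) → ℕ → Term F ar) (h : ∀ i, us i = (ts i).subst (σs i))
    (d : ℕ → Term F ar) :
    ∃ σ : ℕ → Term F ar, (∀ i, us i = (ts i).subst σ) ∧
      ∀ n, (¬ ∃ i, n ∈ (ts i).vars) → σ n = d n := by
  classical
  refine ⟨fun n => if hn : ∃ i, n ∈ (ts i).vars then σs hn.choose n else d n, fun i => ?_,
    fun n hn => dif_neg hn⟩
  rw [h i]
  refine (subst_congr fun n hn => ?_).symm
  have hex : ∃ j, n ∈ (ts j).vars := ⟨i, hn⟩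
  rw [dif_pos hex]
  have : hex.choose = i := linear_app_disjoint hl hex.choose_spec hn
  rw [this]

lemma rewrites_update {R : Set (Term F ar × Term F ar)} {f : F}
    {ts : Fin (ar f) → Term F ar} (i : Fin (ar f)) {s t : Term F ar}
    (h : Rewrites R s t) :
    Rewrites R (Term.app f (Function.update ts i s)) (Term.app f (Function.update ts i t)) := by
  obtain ⟨p, l, r, σ, hm, h1, h2⟩ := h
  refine ⟨(i : ℕ) :: p, l, r, σ, hm, ?_, ?_⟩
  · rw [Term.subtermAt, dif_pos i.isLt, Fin.eta, Function.update_self]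
    exact h1
  · rw [Term.replaceAt, dif_pos i.isLt, Fin.eta, Function.update_self, h2]
    rw [Option.map_some]
    rw [Function.update_idem]

lemma star_update {R : Set (Term F ar × Term F ar)} {f : F}
    {ts : Fin (ar f) → Term F ar} (i : Fin (ar f)) {s t : Term F ar}
    (h : RewritesStar R s t) :
    RewritesStar R (Term.app f (Function.update ts i s)) (Term.app f (Function.update ts i t)) :=
  Relation.ReflTransGen.lift (fun x => Term.app f (Function.update ts i x))
    (fun _ _ hab => rewrites_update i hab) _ _ h

lemma star_app {R : Set (Term F ar × Term F ar)} {f : F}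
    {ts ts' : Fin (ar f) → Term F ar} (h : ∀ i, RewritesStar R (ts i) (ts' i)) :
    RewritesStar R (Term.app f ts) (Term.app f ts') := by
  classical
  have key : ∀ s : Finset (Fin (ar f)),
      RewritesStar R (Term.app f ts) (Term.app f (fun i => if i ∈ s then ts' i else ts i)) := by
    intro s
    induction s using Finset.induction_on with
    | empty => exact Relation.ReflTransGen.refl
    | @insert a s ha ih =>
        refine ih.trans ?_
        set g : Fin (ar f) → Term F ar := fun i => if i ∈ s then ts' i else ts i with hg
        have hga : g a = ts a := by simp [hg, ha]
        have h2 : RewritesStar R (Term.app f g) (Term.app f (Function.update g a (ts' a))) := by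
          have := star_update (ts := g) a (hga ▸ h a)
          rwa [Function.update_eq_self] at this
        refine h2.trans ?_
        have : Function.update g a (ts' a) = fun i => if i ∈ insert a s then ts' i else ts i := by
          funext j
          rcases eq_or_ne j a with rfl | hj
          · simp [Function.update_self]
          · simp [Function.update_of_ne hj, hg, hj]
        rw [this]
  have := key Finset.univ
  simpa using this
lemma match_of_reaches {R : TRS F ar} {enc : Term F ar → Q}
    (hinj : Set.InjOn enc (BStateSet R)) (hll : R.LeftLinear) :
    ∀ {u : Term F ar} {q : Q}, Reaches (BTrans R enc) u q →
      ∀ t ∈ SR R, q = enc (stPattern t) → ∃ σ, u = t.subst σ := by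
  intro u q hr
  induction hr with
  | @app g us qs q hqs hrule ih =>
    intro t ht hq
    cases t with
    | var m => exact ⟨fun _ => Term.app g us, rfl⟩
    | app f tss =>
      have htB : Term.app f tss ∈ BStateSet R :=
        Set.mem_union_left _ ⟨Term.app f tss, ht, rfl⟩
      subst hq
      rcases hrule with hm | hp
      · obtain ⟨f'', ts'', hSR, heq⟩ := hm
        obtain ⟨h1, h2⟩ := Sigma.mk.inj_iff.mp heq
        subst h1
        rw [heq_iff_eq] at h2
        injection h2 with h3 h4
        have hB2 : Term.app g ts'' ∈ BStateSet R :=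
          Set.mem_union_left _ ⟨_, hSR, rfl⟩
        rw [stPattern_app] at h4
        have h5 := hinj htB hB2 h4
        injection h5 with h6 h7
        subst h6
        rw [heq_iff_eq] at h7
        subst h7
        have hσs : ∀ i, ∃ σ, us i = (tss i).subst σ := fun i =>
          ih i (tss i) (SR_args ht i) (congrFun h3 i)
        choose σs hσs using hσs
        obtain ⟨σ, hσ, -⟩ := combine_subst (SR_linear hll ht) us σs hσs (fun n => Term.var n)
        exact ⟨σ, by rw [Term.subst]; exact congrArg _ (funext hσ)⟩
      · obtain ⟨f', heq⟩ := hp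
        obtain ⟨h1, h2⟩ := Sigma.mk.inj_iff.mp heq
        subst h1
        rw [heq_iff_eq] at h2
        injection h2 with h3 h4
        rw [stPattern_app] at h4
        exact absurd (hinj htB (Set.mem_union_right _ rfl) h4) (fun h => by cases h)

section Setup

variable {F : Type} [Fintype F] {ar : F → ℕ} {Q : Type} [Fintype Q] {R : TRS F ar}
  {T : Set (Term F ar)}

lemma sep (C : CSetup Q R T) :
    ∀ {u : Term F ar} {q : Q}, Reaches C.Γ0 u q →
      (q ∈ C.QA → Reaches C.A.trans u q) ∧
      (q ∈ C.enc '' BStateSet R → Reaches (BTrans R C.enc) u q) := by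
  intro u q hr
  induction hr with
  | @app f ts qs q hts hrule ih =>
    rcases hrule with hA | hB
    · have hst := C.hAstates _ hA
      have HA : Reaches C.A.trans (Term.app f ts) q :=
        Reaches.app (fun i => (ih i).1 (hst.2 i)) hA
      exact ⟨fun _ => HA, fun him => (C.hshared q ⟨hst.1, him⟩ _).mp HA⟩
    · rcases hB with hm | hp
      · obtain ⟨f'', ts'', hSR, heq⟩ := hm
        obtain ⟨h1, h2⟩ := Sigma.mk.inj_iff.mp heq
        subst h1
        rw [heq_iff_eq] at h2
        injection h2 with h3 h4
        subst h3; subst h4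
        have HB : Reaches (BTrans R C.enc) (Term.app f ts) (C.enc (Term.app f ts'')) :=
          Reaches.app
            (fun i => (ih i).2 ⟨stPattern (ts'' i),
              Set.mem_union_left _ ⟨ts'' i, SR_args hSR i, rfl⟩, rfl⟩)
            (Or.inl ⟨f, ts'', hSR, rfl⟩)
        have him : C.enc (Term.app f ts'') ∈ C.enc '' BStateSet R :=
          ⟨Term.app f ts'', Set.mem_union_left _ ⟨Term.app f ts'', hSR, rfl⟩, rfl⟩
        exact ⟨fun hQA => (C.hshared _ ⟨hQA, him⟩ _).mpr HB, fun _ => HB⟩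
      · obtain ⟨f', heq⟩ := hp
        obtain ⟨h1, h2⟩ := Sigma.mk.inj_iff.mp heq
        subst h1
        rw [heq_iff_eq] at h2
        injection h2 with h3 h4
        subst h3; subst h4
        have HB : Reaches (BTrans R C.enc) (Term.app f ts) (C.enc (Term.var 0)) :=
          Reaches.app
            (fun i => (ih i).2 ⟨Term.var 0, Set.mem_union_right _ rfl, rfl⟩)
            (Or.inr ⟨f, rfl⟩)
        have him : C.enc (Term.var 0) ∈ C.enc '' BStateSet R :=
          ⟨Term.var 0, Set.mem_union_right _ rfl, rfl⟩
        exact ⟨fun hQA => (C.hshared _ ⟨hQA, him⟩ _).mpr HB, fun _ => HB⟩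

lemma acc (C : CSetup Q R T) {q : Q} (hq : q ∈ C.Qstates) :
    ∃ w : Term F ar, w.Ground ∧ Reaches C.Γ0 w q := by
  rcases hq with hQA | ⟨p, hp, rfl⟩
  · obtain ⟨w, hg, hr⟩ := C.hacc q hQA
    exact ⟨w, hg, reaches_mono Set.subset_union_left hr⟩
  · obtain ⟨g0, hg0⟩ := C.hground
    rcases hp with ⟨t, htSR, rfl⟩ | hp
    · exact ⟨t.subst (fun _ => g0), ground_subst (fun _ _ => hg0),
        reaches_mono Set.subset_union_right (inst_reaches_pattern htSR _ (fun _ => hg0))⟩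
    · rw [Set.mem_singleton_iff] at hp
      subst hp
      exact ⟨g0, hg0, reaches_mono Set.subset_union_right (ground_reaches_x hg0)⟩

end Setup

lemma iterate_subset {R : TRS F ar} {enc : Term F ar → Q} {Qc : Set Q}
    {Γ0 : Set (TARule F ar Q)} {m n : ℕ} (h : m ≤ n) :
    (satStep R enc Qc)^[m] Γ0 ⊆ (satStep R enc Qc)^[n] Γ0 := by
  induction n, h using Nat.le_induction with
  | base => exact subset_rfl
  | succ n hmn ih =>
      rw [Function.iterate_succ_apply']
      exact ih.trans Set.subset_union_left

lemma reaches_satGamma {R : TRS F ar} {enc : Term F ar → Q} {Qc : Set Q}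
    {Γ0 : Set (TARule F ar Q)} {u : Term F ar} {q : Q}
    (h : Reaches (satGamma R enc Qc Γ0) u q) :
    ∃ n, Reaches ((satStep R enc Qc)^[n] Γ0) u q := by
  induction h with
  | @app f ts qs q hts hrule ih =>
    choose ns hns using ih
    obtain ⟨m, hm⟩ := Set.mem_iUnion.mp hrule
    refine ⟨(Finset.univ.sup ns) ⊔ m, Reaches.app
      (fun i => reaches_mono (iterate_subset ?_) (hns i))
      (iterate_subset le_sup_right hm)⟩
    exact (Finset.le_sup (Finset.mem_univ i)).trans le_sup_left
section Main

variable {F : Type} [Fintype F] {ar : F → ℕ} {Q : Type} [Fintype Q] {R : TRS F ar}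
  {T : Set (Term F ar)}

lemma lemC (C : CSetup Q R T) (hlin : R.IsLinear) (hgrow : R.Growing) :
    ∀ (n : ℕ) (u : Term F ar) (q : Q), u.Ground →
      Reaches ((satStep R C.enc C.Qstates)^[n] C.Γ0) u q →
      ∃ u', RewritesStar R.rules u u' ∧ u'.Ground ∧ Reaches C.Γ0 u' q := by
  classical
  intro n
  induction n with
  | zero => intro u q hg h; exact ⟨u, Relation.ReflTransGen.refl, hg, h⟩
  | succ n IH =>
      intro u q hg h
      rw [Function.iterate_succ_apply'] at h
      revert hg
      induction h with
      | @app f ts qs q hts hrule ihh =>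
        intro hg
        have hgs : ∀ i, (ts i).Ground := ground_app.mp hg
        have ih1 : ∀ i, ∃ t', RewritesStar R.rules (ts i) t' ∧ t'.Ground ∧
            Reaches C.Γ0 t' (qs i) := fun i => ihh i (hgs i)
        choose ts' hstar hg' hr0 using ih1
        have hstar1 : RewritesStar R.rules (Term.app f ts) (Term.app f ts') := star_app hstar
        have hg1 : (Term.app f ts').Ground := ground_app.mpr hg'
        rcases hrule with hold | hnew
        · have hr1 : Reaches ((satStep R C.enc C.Qstates)^[n] C.Γ0) (Term.app f ts') q :=
            Reaches.app (fun i => reaches_mono (iterate_subset (Nat.zero_le n)) (hr0 i)) hold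
          obtain ⟨u', h1, h2, h3⟩ := IH _ _ hg1 hr1
          exact ⟨u', hstar1.trans h1, h2, h3⟩
        · obtain ⟨f', ls, r, θ, q', hrm, hθ, hrT, heq⟩ := hnew
          obtain ⟨h1, h2⟩ := Sigma.mk.inj_iff.mp heq
          subst h1
          rw [heq_iff_eq] at h2
          injection h2 with h3 h4
          subst h4
          have hlhs : (Term.app f ls).Linear := hlin.1 _ hrm
          have hσs : ∀ i, ∃ σi, ts' i = (ls i).subst σi := by
            intro i
            cases hls : ls i with
            | var m => exact ⟨fun _ => ts' i, rfl⟩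
            | app g ss =>
                have hSR : ls i ∈ SR R := SR_self_arg hrm rfl i
                have hqi : qs i = C.enc (stPattern (ls i)) := by
                  rw [congrFun h3 i, hls]; rfl
                have hb := (sep C (hr0 i)).2
                  ⟨stPattern (ls i), Set.mem_union_left _ ⟨ls i, hSR, rfl⟩, hqi.symm⟩
                rw [← hls]
                exact match_of_reaches C.henc hlin.1 hb (ls i) hSR hqi
          choose σs hσs2 using hσs
          have hwit : ∀ m ∈ r.vars, ∃ w : Term F ar, w.Ground ∧ Reaches C.Γ0 w (θ m) :=
            fun m hm => acc C (hθ m hm)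
          obtain ⟨g0, hg0⟩ := C.hground
          set d : ℕ → Term F ar :=
            fun m => if hm : m ∈ r.vars then (hwit m hm).choose else g0 with hd
          obtain ⟨σ, hσ, hσd⟩ := combine_subst hlhs ts' σs hσs2 d
          have hkey : ∀ m ∈ r.vars, (σ m).Ground ∧ Reaches C.Γ0 (σ m) (θ m) := by
            intro m hm
            by_cases hex : ∃ i, m ∈ (ls i).vars
            · obtain ⟨i, hi⟩ := hex
              have hml : m ∈ (Term.app f ls).vars := by
                simp only [Term.vars, Finset.mem_biUnion, Finset.mem_univ, true_and]
                exact ⟨i, hi⟩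
              have hv : ls i = Term.var m :=
                hgrow (Term.app f ls, r) hrm m hml hm f ls rfl i hi
              have hts' : ts' i = σ m := by rw [hσ i, hv]; rfl
              have hq : qs i = θ m := by
                rw [congrFun h3 i, hv]; simp [satArg, hm]
              exact ⟨hts' ▸ hg' i, hts' ▸ hq ▸ hr0 i⟩
            · have hdm : σ m = d m := hσd m hex
              rw [hdm, hd]
              simp only [dif_pos hm]
              exact (hwit m hm).choose_spec
          have hu1 : Term.app f ts' = (Term.app f ls).subst σ := by
            rw [Term.subst]; exact congrArg _ (funext hσ)
          have hstep : Rewrites R.rules (Term.app f ts') (r.subst σ) :=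
            ⟨[], Term.app f ls, r, σ, hrm, by rw [Term.subtermAt, hu1], rfl⟩
          have hg2 : (r.subst σ).Ground := ground_subst (fun m hm => (hkey m hm).1)
          have hr2 : Reaches ((satStep R C.enc C.Qstates)^[n] C.Γ0) (r.subst σ) q :=
            reachesT_subst hrT σ
              (fun m hm => reaches_mono (iterate_subset (Nat.zero_le n)) (hkey m hm).2)
          obtain ⟨u', h1', h2', h3'⟩ := IH _ _ hg2 hr2
          exact ⟨u', hstar1.trans ((Relation.ReflTransGen.single hstep).trans h1'), h2', h3'⟩

end Main
end Stmt4Aux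

open Stmt4Aux

/-- Let `ℛ` be a linear growing TRS over `𝓖` and `𝒞_T(ℛ)` the saturated
automaton.  If `s →_{𝒞_T(ℛ)}* q` for a ground term `s`, then (1) if `q = ⟨t⟩` with
`t ∈ S_ℛ ∪ {x}` then `s` rewrites in `ℛ` to a ground instance of `t`, and (2) if `q` is
a final state then `s ∈ (→_ℛ*)[T]`. -/
theorem statement4 {G : Type} [Fintype G] {arG : G → ℕ} {Q : Type} [Fintype Q]
    (R : TRS G arG) (hlin : R.IsLinear) (hgrow : R.Growing)
    (T : Set (Term G arG)) (C : CSetup Q R T)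
    (s : Term G arG) (hs : s.Ground) :
    (∀ t ∈ SR R ∪ {Term.var 0},
        Reaches C.Γsat s (C.enc (stPattern t)) →
          ∃ u ∈ GInst t, RewritesStar R.rules s u) ∧
    (∀ q ∈ C.A.final, Reaches C.Γsat s q → ∃ t ∈ T, RewritesStar R.rules s t) := by
  constructor
  · intro t ht hr
    obtain ⟨n, hn⟩ := reaches_satGamma hr
    obtain ⟨u', h1, h2, h3⟩ := lemC C hlin hgrow n s _ hs hn
    rcases ht with htSR | ht0
    · have hb := (sep C h3).2 ⟨stPattern t, Set.mem_union_left _ ⟨t, htSR, rfl⟩, rfl⟩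
      obtain ⟨σ, hσ⟩ := match_of_reaches C.henc hlin.1 hb t htSR rfl
      exact ⟨u', ⟨h2, σ, hσ⟩, h1⟩
    · rw [Set.mem_singleton_iff] at ht0
      subst ht0
      exact ⟨u', ⟨h2, fun _ => u', rfl⟩, h1⟩
  · intro q hq hr
    obtain ⟨n, hn⟩ := reaches_satGamma hr
    obtain ⟨u', h1, h2, h3⟩ := lemC C hlin hgrow n s _ hs hn
    have hA := (sep C h3).1 (C.hfinal hq)
    exact ⟨u', by rw [C.hT]; exact ⟨h2, q, hq, hA⟩, h1⟩
end
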